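/- Let n ≥ 1 be a natural number. Let A, B, C be chain complexes of abelian groups indexed by the natural numbers such that each A_k, B_k, C_k is a finitely generated free abelian group and A_k = B_k = C_k = 0 for all k > n. Let f : A → B and g : B → C be chain maps such that for every k the sequence 0 → A_k → B_k → C_k → 0 is a short exact sequence. Assume that H_0(B) ≅ ℤ, H_n(B) ≅ ℤ, and H_k(B) = 0 for all k ∉ {0, n}. Then the following are equivalent: (i) H_n(A) ≅ ℤ and H_k(A) = 0 for all k ≠ n; (ii) H_0(C) ≅ ℤ and H_k(C) = 0 for all k ≠ 0. -/

import Mathlib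

open CategoryTheory CategoryTheory.Limits

private lemma abHomZero {X Y : AddCommGrpCat} (φ : X ⟶ Y) : φ 0 = 0 :=
  map_zero φ.hom

private lemma abHomZsmul {X Y : AddCommGrpCat} (φ : X ⟶ Y) (m : ℤ) (x : X) :
    φ (m • x) = m • φ x := map_zsmul φ.hom m x

private lemma abHomSub {X Y : AddCommGrpCat} (φ : X ⟶ Y) (x y : X) :
    φ (x - y) = φ x - φ y := map_sub φ.hom x y

private lemma abInjOf {X Y : AddCommGrpCat} (φ : X ⟶ Y) (h : ∀ x, φ x = 0 → x = 0) :
    Function.Injective φ := fun x y hxy => by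
  have := h (x - y) (by rw [abHomSub, hxy, sub_self])
  exact sub_eq_zero.1 this

private lemma abIsoHomInv {X Y : AddCommGrpCat} (e : X ≅ Y) (x : X) : e.inv (e.hom x) = x := by
  rw [← comp_apply, e.hom_inv_id]; rfl

private lemma abIsoInvHom {X Y : AddCommGrpCat} (e : X ≅ Y) (y : Y) : e.hom (e.inv y) = y := by
  rw [← comp_apply, e.inv_hom_id]; rfl

private lemma abSubsingletonHomology (K : ChainComplex AddCommGrpCat ℕ) (k : ℕ)
    (h : Subsingleton (K.X k)) : Subsingleton (K.homology k) := by
  have h1 : Function.Injective (K.iCycles k) := (AddCommGrpCat.mono_iff_injective _).1 inferInstance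
  have h2 : Function.Surjective (K.homologyπ k) := (AddCommGrpCat.epi_iff_surjective _).1 inferInstance
  haveI : Subsingleton (K.cycles k) := ⟨fun a b => h1 (Subsingleton.elim _ _)⟩
  exact h2.subsingleton

private lemma abIntInj {X Y : AddCommGrpCat} (φ : X ⟶ Y) (eX : X ≅ AddCommGrpCat.of ℤ)
    (eY : Y ≅ AddCommGrpCat.of ℤ) (hφ : Function.Surjective φ) : Function.Injective φ := by
  set χ : ℤ →+ ℤ := (eX.inv ≫ φ ≫ eY.hom).hom with hχ
  have hχapp : ∀ z : ℤ, χ z = eY.hom (φ (eX.inv z)) := fun z => rfl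
  have hχs : Function.Surjective χ := by
    intro z
    obtain ⟨y, hy⟩ := hφ (eY.inv z)
    refine ⟨eX.hom y, ?_⟩
    rw [hχapp, abIsoHomInv, hy, abIsoInvHom]
  have hlin : ∀ m : ℤ, χ m = m * χ 1 := by
    intro m
    have := map_zsmul (show (ℤ : Type) →+ (ℤ : Type) from χ) m (1 : ℤ)
    simpa [smul_eq_mul] using this
  have h1 : χ 1 ≠ 0 := by
    obtain ⟨a, ha⟩ := hχs 1
    intro h; rw [hlin a, h, mul_zero] at ha; exact one_ne_zero ha.symm
  have hχi : Function.Injective χ := by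
    intro a b hab
    rw [hlin a, hlin b] at hab
    exact mul_right_cancel₀ h1 hab
  intro x y hxy
  have h2 : χ (eX.hom x) = χ (eX.hom y) := by
    rw [hχapp, hχapp, abIsoHomInv, abIsoHomInv, hxy]
  have h3 := hχi h2
  exact (AddCommGrpCat.mono_iff_injective eX.hom).1 inferInstance h3

theorem property_P_iff_property_Pminus (n : ℕ) (hn : 1 ≤ n)
    (A B C : ChainComplex AddCommGrpCat ℕ)
    (hAfree : ∀ k, Module.Free ℤ (A.X k)) (hAfin : ∀ k, Module.Finite ℤ (A.X k))
    (hBfree : ∀ k, Module.Free ℤ (B.X k)) (hBfin : ∀ k, Module.Finite ℤ (B.X k))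
    (hCfree : ∀ k, Module.Free ℤ (C.X k)) (hCfin : ∀ k, Module.Finite ℤ (C.X k))
    (hAtop : ∀ k, n < k → Subsingleton (A.X k))
    (hBtop : ∀ k, n < k → Subsingleton (B.X k))
    (hCtop : ∀ k, n < k → Subsingleton (C.X k))
    (f : A ⟶ B) (g : B ⟶ C)
    (hinj : ∀ k, Function.Injective (f.f k))
    (hsurj : ∀ k, Function.Surjective (g.f k))
    (hexact : ∀ k, ∀ y : B.X k, g.f k y = 0 ↔ ∃ x : A.X k, f.f k x = y)
    (hB0 : Nonempty (B.homology 0 ≅ AddCommGrpCat.of ℤ))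
    (hBn : Nonempty (B.homology n ≅ AddCommGrpCat.of ℤ))
    (hBk : ∀ k, k ≠ 0 → k ≠ n → Subsingleton (B.homology k)) :
    ((Nonempty (A.homology n ≅ AddCommGrpCat.of ℤ) ∧
        ∀ k, k ≠ n → Subsingleton (A.homology k)) ↔
      (Nonempty (C.homology 0 ≅ AddCommGrpCat.of ℤ) ∧
        ∀ k, k ≠ 0 → Subsingleton (C.homology k))) := by
  obtain ⟨eB0⟩ := hB0
  obtain ⟨eBn⟩ := hBn
  -- the short exact sequence of complexes
  have hw : f ≫ g = 0 := by
    ext k x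
    have : g.f k (f.f k x) = 0 := (hexact k _).2 ⟨x, rfl⟩
    simpa using this
  have hSE : (ShortComplex.mk f g hw).ShortExact := by
    rw [HomologicalComplex.shortExact_iff_degreewise_shortExact]
    intro k
    exact
      { exact := (ShortComplex.ab_exact_iff _).2 (fun y hy => (hexact k y).1 hy)
        mono_f := (AddCommGrpCat.mono_iff_injective _).2 (hinj k)
        epi_g := (AddCommGrpCat.epi_iff_surjective _).2 (hsurj k) }
  -- composite of the induced maps on homology is zero
  have hcomp : ∀ k (x : A.homology k),
      HomologicalComplex.homologyMap g k (HomologicalComplex.homologyMap f k x) = 0 := by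
    intro k x
    have h : HomologicalComplex.homologyMap f k ≫ HomologicalComplex.homologyMap g k = 0 := by
      rw [← HomologicalComplex.homologyMap_comp, hw, HomologicalComplex.homologyMap_zero]
    have := congrArg (fun φ : A.homology k ⟶ C.homology k => φ x) h
    simpa using this
  -- exactness consequences
  have hinj1 : ∀ i j : ℕ, i = j + 1 → Subsingleton (C.homology i) →
      Function.Injective (HomologicalComplex.homologyMap f j) := by
    intro i j hij hs
    apply abInjOf
    intro x hx
    obtain ⟨z, hz⟩ := (ShortComplex.ab_exact_iff _).1
      (hSE.homology_exact₁ i j (by simp [ComplexShape.down_Rel, hij])) x hx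
    rw [← hz, Subsingleton.elim z 0, abHomZero]
  have hex2 : ∀ k (y : B.homology k), HomologicalComplex.homologyMap g k y = 0 →
      ∃ x, HomologicalComplex.homologyMap f k x = y :=
    fun k => (ShortComplex.ab_exact_iff _).1 (hSE.homology_exact₂ k)
  have hex3 : ∀ i j : ℕ, i = j + 1 → Subsingleton (A.homology j) →
      Function.Surjective (HomologicalComplex.homologyMap g i) := by
    intro i j hij hs x
    obtain ⟨y, hy⟩ := (ShortComplex.ab_exact_iff _).1
      (hSE.homology_exact₃ i j (by simp [ComplexShape.down_Rel, hij])) x (Subsingleton.elim _ _)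
    exact ⟨y, hy⟩
  -- surjectivity of the induced map on H₀
  have hsurj0 : Function.Surjective (HomologicalComplex.homologyMap g 0) := by
    haveI : Epi (g.f 0) := (AddCommGrpCat.epi_iff_surjective _).2 (hsurj 0)
    haveI := HomologicalComplex.epi_homologyMap_of_epi_of_not_rel g 0
      (fun j hj => by simp [ComplexShape.down_Rel] at hj)
    exact (AddCommGrpCat.epi_iff_surjective _).1 this
  -- torsion-freeness of H_n(C)
  have htf : ∀ (m : ℤ) (x : C.homology n), m ≠ 0 → m • x = 0 → x = 0 := by
    have hd : C.d (n + 1) n = 0 := by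
      haveI := hCtop (n + 1) (by omega)
      ext x
      rw [Subsingleton.elim x 0]
      simp
    haveI : IsIso (C.homologyπ n) := C.isIso_homologyπ (n + 1) n (ChainComplex.prev ℕ n) hd
    set emb : C.homology n ⟶ C.X n := inv (C.homologyπ n) ≫ C.iCycles n with hembd
    have hembi : Function.Injective emb := (AddCommGrpCat.mono_iff_injective _).1 inferInstance
    intro m x hm hx
    have h1 : emb (m • x) = m • emb x := abHomZsmul emb m x
    rw [hx, abHomZero] at h1
    haveI := hCfree n
    have h2 : emb x = 0 := (smul_eq_zero.1 h1.symm).resolve_left hm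
    exact hembi (h2.trans (abHomZero emb).symm)
  constructor
  · rintro ⟨⟨eA⟩, hAk⟩
    have hA0 : Subsingleton (A.homology 0) := hAk 0 (by omega)
    constructor
    · -- H₀(C) ≅ ℤ
      have hinj0 : Function.Injective (HomologicalComplex.homologyMap g 0) := by
        apply abInjOf
        intro y hy
        obtain ⟨x, hx⟩ := hex2 0 y hy
        rw [← hx, Subsingleton.elim x 0, abHomZero]
      haveI : IsIso (HomologicalComplex.homologyMap g 0) :=
        (ConcreteCategory.isIso_iff_bijective _).2 ⟨hinj0, hsurj0⟩
      exact ⟨(asIso (HomologicalComplex.homologyMap g 0)).symm ≪≫ eB0⟩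
    · intro k hk0
      rcases lt_trichotomy k n with hkn | heq | hkn
      · -- 0 < k < n
        have hsk : Function.Surjective (HomologicalComplex.homologyMap g k) := by
          obtain ⟨j, rfl⟩ : ∃ j, k = j + 1 := ⟨k - 1, by omega⟩
          exact hex3 (j + 1) j rfl (hAk j (by omega))
        haveI := hBk k hk0 (by omega)
        exact hsk.subsingleton
      · -- k = n : the torsion argument
        rw [heq]
        have hψs : Function.Surjective (HomologicalComplex.homologyMap g n) := by
          obtain ⟨j, hj⟩ : ∃ j, n = j + 1 := ⟨n - 1, by omega⟩
          exact hex3 n j hj (hAk j (by omega))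
        have hιi : Function.Injective (HomologicalComplex.homologyMap f n) :=
          hinj1 (n + 1) n rfl (abSubsingletonHomology C (n + 1) (hCtop _ (by omega)))
        set u : A.homology n := eA.inv (1 : ℤ) with hu
        set d : ℤ := eBn.hom (HomologicalComplex.homologyMap f n u) with hdd
        have hd0 : d ≠ 0 := by
          intro h
          have h2 : HomologicalComplex.homologyMap f n u = 0 := by
            apply (AddCommGrpCat.mono_iff_injective eBn.hom).1 inferInstance
            rw [← hdd, h, abHomZero]
          have h3 : u = 0 := hιi (h2.trans (abHomZero _).symm)
          have h4 : eA.hom u = (1 : ℤ) := by rw [hu, abIsoInvHom]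
          rw [h3, abHomZero] at h4
          exact one_ne_zero (α := ℤ) h4.symm
        have hrange : ∀ y : B.homology n,
            ∃ x, HomologicalComplex.homologyMap f n x = d • y := by
          intro y
          set c : ℤ := eBn.hom y with hc
          refine ⟨c • u, ?_⟩
          apply (AddCommGrpCat.mono_iff_injective eBn.hom).1 inferInstance
          rw [abHomZsmul (HomologicalComplex.homologyMap f n) c u, abHomZsmul eBn.hom c,
            abHomZsmul eBn.hom d y, ← hdd, ← hc]
          show c • d = d • c
          rw [smul_eq_mul, smul_eq_mul, mul_comm]
        refine ⟨fun a b => ?_⟩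
        suffices h : ∀ x : C.homology n, x = 0 by rw [h a, h b]
        intro x
        obtain ⟨y, hy⟩ := hψs x
        obtain ⟨z, hz⟩ := hrange y
        have : d • x = 0 := by
          rw [← hy, ← abHomZsmul (HomologicalComplex.homologyMap g n) d y, ← hz]
          exact hcomp n z
        exact htf d x hd0 this
      · -- k > n
        exact abSubsingletonHomology C k (hCtop k hkn)
  · rintro ⟨⟨eC⟩, hCk⟩
    have hCsub : ∀ i : ℕ, i ≠ 0 → Subsingleton (C.homology i) := hCk
    constructor
    · -- H_n(A) ≅ ℤ
      have hιi : Function.Injective (HomologicalComplex.homologyMap f n) :=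
        hinj1 (n + 1) n rfl (hCsub (n + 1) (by omega))
      have hιs : Function.Surjective (HomologicalComplex.homologyMap f n) := by
        intro y
        haveI := hCsub n (by omega)
        exact hex2 n y (Subsingleton.elim _ _)
      haveI : IsIso (HomologicalComplex.homologyMap f n) :=
        (ConcreteCategory.isIso_iff_bijective _).2 ⟨hιi, hιs⟩
      exact ⟨asIso (HomologicalComplex.homologyMap f n) ≪≫ eBn⟩
    · intro k hkn
      rcases Nat.eq_zero_or_pos k with rfl | hk0
      · -- k = 0
        have hι0 : Function.Injective (HomologicalComplex.homologyMap f 0) :=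
          hinj1 1 0 rfl (hCsub 1 (by omega))
        have hψ0 : Function.Injective (HomologicalComplex.homologyMap g 0) :=
          abIntInj _ eB0 eC hsurj0
        refine ⟨fun a b => ?_⟩
        suffices h : ∀ x : A.homology 0, x = 0 by rw [h a, h b]
        intro x
        apply hι0
        rw [abHomZero]
        apply hψ0
        rw [hcomp, abHomZero]
      · rcases lt_trichotomy k n with hlt | heq | hgt
        · -- 0 < k < n
          have hι : Function.Injective (HomologicalComplex.homologyMap f k) :=
            hinj1 (k + 1) k rfl (hCsub (k + 1) (by omega))
          haveI := hBk k (by omega) (by omega)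
          exact ⟨fun a b => hι (Subsingleton.elim _ _)⟩
        · exact absurd heq hkn
        · exact abSubsingletonHomology A k (hAtop k hgt)
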